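/- For every m ≥ 1, the odd cycle graph C_{2m+1} admits an embedding with scale 2 into ℤ^{2m+1} in which every coordinate of the image of every vertex lies in {0,1} (i.e., C_{2m+1} embeds with scale 2 into the hypercube H_{2m+1}). -/
import Mathlib

open Finset

/-- The cycle graph on `ZMod k`: `i` is adjacent to `i ± 1`. -/
def cycleGraph (k : ℕ) : SimpleGraph (ZMod k) :=
  SimpleGraph.fromRel (fun i j => i = j + 1)

lemma abs_ite_sub (P Q : Prop) [Decidable P] [Decidable Q] :
    |(if P then (1:ℤ) else 0) - (if Q then 1 else 0)| = if (P ↔ Q) then 0 else 1 := by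
  by_cases hP : P <;> by_cases hQ : Q <;> simp [hP, hQ]

lemma sum_fin_zmod (n : ℕ) [NeZero n] (F : ZMod n → ℤ) :
    ∑ i : Fin n, F ((i : ℕ) : ZMod n) = ∑ j : ZMod n, F j := by
  apply Fintype.sum_bijective (fun i : Fin n => ((i : ℕ) : ZMod n))
  · rw [Fintype.bijective_iff_injective_and_card]
    refine ⟨fun i j h => ?_, by simp [ZMod.card]⟩
    have := congrArg ZMod.val h
    rwa [ZMod.val_natCast_of_lt i.isLt, ZMod.val_natCast_of_lt j.isLt, ← Fin.ext_iff] at this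
  · intro; rfl

lemma sum_zmod_range (n : ℕ) [NeZero n] (c : ℕ → ℤ) :
    ∑ j : ZMod n, c j.val = ∑ t ∈ range n, c t := by
  rw [← sum_fin_zmod n (fun j => c j.val)]
  rw [← Fin.sum_univ_eq_sum_range]
  exact Finset.sum_congr rfl fun i _ => by rw [ZMod.val_natCast_of_lt i.isLt]

lemma count_lemma (m k : ℕ) (hk : k < 2*m+1) :
    ∑ t ∈ range (2*m+1), (if ((t + k) % (2*m+1) < m ↔ t < m) then (0:ℤ) else 1)
      = 2 * min k (2*m+1-k) := by
  set n := 2*m+1 with hn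
  have const_chunk : ∀ a b : ℕ, a ≤ b → ∀ z : ℤ,
      (∀ t, a ≤ t → t < b → (if ((t + k) % n < m ↔ t < m) then (0:ℤ) else 1) = z) →
      ∑ t ∈ Finset.Ico a b, (if ((t + k) % n < m ↔ t < m) then (0:ℤ) else 1) = (b - a : ℕ) • z := by
    intro a b hab z hz
    rw [← Nat.card_Ico a b, ← Finset.sum_const]
    exact Finset.sum_congr rfl fun t ht => by
      rw [Finset.mem_Ico] at ht; exact hz t ht.1 ht.2
  have hmod : ∀ t, t < n → (t + k) % n = if t + k < n then t + k else t + k - n := by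
    intro t ht
    split
    · exact Nat.mod_eq_of_lt (by omega)
    · rw [Nat.mod_eq_sub_mod (by omega), Nat.mod_eq_of_lt (by omega)]
  rcases le_or_gt k m with h | h
  · rw [range_eq_Ico,
      ← Finset.sum_Ico_consecutive _ (by omega : 0 ≤ m - k) (by omega : m - k ≤ n),
      ← Finset.sum_Ico_consecutive _ (by omega : m - k ≤ m) (by omega : m ≤ n),
      ← Finset.sum_Ico_consecutive _ (by omega : m ≤ n - k) (by omega : n - k ≤ n)]
    rw [const_chunk 0 (m-k) (by omega) 0 ?_, const_chunk (m-k) m (by omega) 1 ?_,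
        const_chunk m (n-k) (by omega) 0 ?_, const_chunk (n-k) n (by omega) 1 ?_]
    · simp; omega
    · intro t h1 h2; rw [hmod t (by omega), if_neg (by split <;> omega)]
    · intro t h1 h2; rw [hmod t (by omega), if_pos (by split <;> omega)]
    · intro t h1 h2; rw [hmod t (by omega), if_neg (by split <;> omega)]
    · intro t h1 h2; rw [hmod t (by omega), if_pos (by split <;> omega)]
  · rw [range_eq_Ico,
      ← Finset.sum_Ico_consecutive _ (by omega : 0 ≤ n - k) (by omega : n - k ≤ n),
      ← Finset.sum_Ico_consecutive _ (by omega : n - k ≤ m) (by omega : m ≤ n),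
      ← Finset.sum_Ico_consecutive _ (by omega : m ≤ m + (n-k)) (by omega : m + (n-k) ≤ n)]
    rw [const_chunk 0 (n-k) (by omega) 1 ?_, const_chunk (n-k) m (by omega) 0 ?_,
        const_chunk m (m+(n-k)) (by omega) 1 ?_, const_chunk (m+(n-k)) n (by omega) 0 ?_]
    · simp; omega
    · intro t h1 h2; rw [hmod t (by omega), if_pos (by split <;> omega)]
    · intro t h1 h2; rw [hmod t (by omega), if_neg (by split <;> omega)]
    · intro t h1 h2; rw [hmod t (by omega), if_pos (by split <;> omega)]
    · intro t h1 h2; rw [hmod t (by omega), if_neg (by split <;> omega)]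

/-- indicator of the interval `[0, m)` in `ZMod (2m+1)` -/
def gInd (m : ℕ) (x : ZMod (2*m+1)) : ℤ := if x.val < m then 1 else 0

/-- the embedding: vertex `u` maps to the indicator of the cyclic interval `[u, u+m)` -/
def fEmb (m : ℕ) (u : ZMod (2*m+1)) (i : Fin (2*m+1)) : ℤ :=
  gInd m (((i : ℕ) : ZMod (2*m+1)) - u)

lemma ham_eq (m : ℕ) (u v : ZMod (2*m+1)) :
    ∑ i : Fin (2*m+1), |fEmb m u i - fEmb m v i|
      = 2 * min ((v - u).val) (2*m+1 - (v - u).val) := by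
  haveI : NeZero (2*m+1) := ⟨by omega⟩
  have step1 : ∑ i : Fin (2*m+1), |fEmb m u i - fEmb m v i|
      = ∑ j : ZMod (2*m+1), |gInd m (j - u) - gInd m (j - v)| :=
    sum_fin_zmod (2*m+1) (fun j => |gInd m (j - u) - gInd m (j - v)|)
  have step2 : ∑ j : ZMod (2*m+1), |gInd m (j - u) - gInd m (j - v)|
      = ∑ j : ZMod (2*m+1), |gInd m (j + (v - u)) - gInd m j| := by
    refine (Fintype.sum_equiv (Equiv.addRight v)
      (fun j => |gInd m (j + (v - u)) - gInd m j|)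
      (fun j => |gInd m (j - u) - gInd m (j - v)|) ?_).symm
    intro x
    simp only [Equiv.coe_addRight]
    rw [add_sub_assoc, add_sub_cancel_right]
  have step3 : ∑ j : ZMod (2*m+1), |gInd m (j + (v - u)) - gInd m j|
      = ∑ j : ZMod (2*m+1),
          (if ((j.val + (v - u).val) % (2*m+1) < m ↔ j.val < m) then (0:ℤ) else 1) := by
    refine Finset.sum_congr rfl fun j _ => ?_
    rw [gInd, gInd, abs_ite_sub, ZMod.val_add]
  rw [step1, step2, step3,
    sum_zmod_range (2*m+1) (fun t => if ((t + (v - u).val) % (2*m+1) < m ↔ t < m) then (0:ℤ) else 1),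
    count_lemma m ((v - u).val) (ZMod.val_lt _)]

lemma exists_walk (m : ℕ) (hm : 1 ≤ m) (u : ZMod (2*m+1)) (d : ℕ) :
    ∃ w : (cycleGraph (2*m+1)).Walk u (u + (d : ZMod (2*m+1))), w.length = d := by
  induction d with
  | zero => rw [Nat.cast_zero, add_zero]; exact ⟨SimpleGraph.Walk.nil, rfl⟩
  | succ d ih =>
    obtain ⟨w, hw⟩ := ih
    have hone : (1 : ZMod (2*m+1)) ≠ 0 := by
      haveI : Fact (1 < 2*m+1) := ⟨by omega⟩
      intro h
      have := congrArg ZMod.val h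
      rw [ZMod.val_one, ZMod.val_zero] at this
      omega
    have hadj : (cycleGraph (2*m+1)).Adj (u + (d : ZMod (2*m+1)))
        (u + ((d+1 : ℕ) : ZMod (2*m+1))) := by
      rw [cycleGraph, SimpleGraph.fromRel_adj]
      push_cast
      refine ⟨?_, Or.inr (by ring)⟩
      intro h
      rw [← add_assoc] at h
      exact hone (left_eq_add.mp h)
    exact ⟨w.concat hadj, by rw [SimpleGraph.Walk.length_concat, hw]⟩

lemma dist_le_val (m : ℕ) (hm : 1 ≤ m) (u v : ZMod (2*m+1)) :
    (cycleGraph (2*m+1)).dist u v ≤ (v - u).val := by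
  haveI : NeZero (2*m+1) := ⟨by omega⟩
  obtain ⟨w, hw⟩ := exists_walk m hm u ((v - u).val)
  have e1 : u + (((v - u).val : ℕ) : ZMod (2*m+1)) = v := by
    rw [ZMod.natCast_val, ZMod.cast_id]; ring
  have := SimpleGraph.dist_le (w.copy rfl e1)
  rwa [SimpleGraph.Walk.length_copy, hw] at this

lemma reachable_cycle (m : ℕ) (hm : 1 ≤ m) (u v : ZMod (2*m+1)) :
    (cycleGraph (2*m+1)).Reachable u v := by
  haveI : NeZero (2*m+1) := ⟨by omega⟩
  obtain ⟨w, _⟩ := exists_walk m hm u ((v - u).val)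
  have e1 : u + (((v - u).val : ℕ) : ZMod (2*m+1)) = v := by
    rw [ZMod.natCast_val, ZMod.cast_id]; ring
  exact ⟨w.copy rfl e1⟩

lemma dist_le_min (m : ℕ) (hm : 1 ≤ m) (u v : ZMod (2*m+1)) :
    (cycleGraph (2*m+1)).dist u v ≤ min ((v - u).val) (2*m+1 - (v - u).val) := by
  haveI : NeZero (2*m+1) := ⟨by omega⟩
  refine le_min (dist_le_val m hm u v) ?_
  rcases eq_or_ne u v with rfl | hne
  · rw [SimpleGraph.dist_self]; omega
  · have h1 := dist_le_val m hm v u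
    rw [SimpleGraph.dist_comm] at h1
    have hsum : (u - v).val = 2*m+1 - (v - u).val := by
      have hz : ((v - u) + (u - v)).val = 0 := by
        rw [show (v - u) + (u - v) = 0 by ring, ZMod.val_zero]
      rw [ZMod.val_add] at hz
      have ha : (v - u).val < 2*m+1 := ZMod.val_lt _
      have hb : (u - v).val < 2*m+1 := ZMod.val_lt _
      have hpa : 0 < (v - u).val := by
        rcases Nat.eq_zero_or_pos ((v - u).val) |>.symm with h | h
        · exact h
        · exact absurd ((ZMod.val_eq_zero _).mp h) (sub_ne_zero.mpr (Ne.symm hne))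
      have hpb : 0 < (u - v).val := by
        rcases Nat.eq_zero_or_pos ((u - v).val) |>.symm with h | h
        · exact h
        · exact absurd ((ZMod.val_eq_zero _).mp h) (sub_ne_zero.mpr hne)
      rcases Nat.lt_or_ge ((v - u).val + (u - v).val) (2*m+1) with hlt | hge
      · rw [Nat.mod_eq_of_lt hlt] at hz; omega
      · rw [Nat.mod_eq_sub_mod hge, Nat.mod_eq_of_lt (by omega)] at hz; omega
    omega

lemma ham_le_walk (m : ℕ) (hm : 1 ≤ m) {u v : ZMod (2*m+1)}
    (w : (cycleGraph (2*m+1)).Walk u v) :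
    ∑ i : Fin (2*m+1), |fEmb m u i - fEmb m v i| ≤ 2 * (w.length : ℤ) := by
  induction w with
  | nil => simp
  | @cons a b c h p ih =>
    have edge : ∑ i : Fin (2*m+1), |fEmb m a i - fEmb m b i| ≤ 2 := by
      rw [ham_eq]
      rw [cycleGraph, SimpleGraph.fromRel_adj] at h
      obtain ⟨hne, hcase⟩ := h
      have hbound : min ((b - a).val) (2*m+1 - (b - a).val) ≤ 1 := by
        rcases hcase with h1 | h1
        · -- a = b + 1, so b - a = -1
          have : b - a = -1 := by rw [h1]; ring
          rw [this]
          have hval : (-1 : ZMod (2*m+1)).val = 2*m := ZMod.val_neg_one (2*m)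
          rw [hval]
          omega
        · -- b = a + 1, so b - a = 1
          have : b - a = 1 := by rw [h1]; ring
          rw [this]
          haveI : Fact (1 < 2*m+1) := ⟨by omega⟩
          rw [ZMod.val_one]
          omega
      have : ((min ((b - a).val) (2*m+1 - (b - a).val) : ℕ) : ℤ) ≤ 1 := by exact_mod_cast hbound
      linarith
    calc ∑ i : Fin (2*m+1), |fEmb m a i - fEmb m c i|
        ≤ ∑ i : Fin (2*m+1), (|fEmb m a i - fEmb m b i| + |fEmb m b i - fEmb m c i|) :=
          Finset.sum_le_sum fun i _ => abs_sub_le _ _ _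
      _ = ∑ i : Fin (2*m+1), |fEmb m a i - fEmb m b i|
            + ∑ i : Fin (2*m+1), |fEmb m b i - fEmb m c i| := Finset.sum_add_distrib
      _ ≤ 2 + 2 * (p.length : ℤ) := add_le_add edge ih
      _ = 2 * (((SimpleGraph.Walk.cons h p).length : ℕ) : ℤ) := by
          rw [SimpleGraph.Walk.length_cons]; push_cast; ring

theorem odd_cycle_embeds_hypercube (m : ℕ) (hm : 1 ≤ m) :
    ∃ f : ZMod (2 * m + 1) → Fin (2 * m + 1) → ℤ,
      (∀ v i, f v i = 0 ∨ f v i = 1) ∧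
      ∀ u v : ZMod (2 * m + 1),
        2 * ((cycleGraph (2 * m + 1)).dist u v : ℤ) = ∑ i, |f u i - f v i| := by
  refine ⟨fEmb m, fun v i => by unfold fEmb gInd; split <;> simp, ?_⟩
  intro u v
  have h1 := ham_eq m u v
  have h2 := dist_le_min m hm u v
  obtain ⟨p, hp⟩ := (reachable_cycle m hm u v).exists_walk_length_eq_dist
  have h3 := ham_le_walk m hm p
  rw [hp] at h3
  have h2' : ((cycleGraph (2*m+1)).dist u v : ℤ)
      ≤ (min ((v - u).val) (2*m+1 - (v - u).val) : ℕ) := by exact_mod_cast h2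
  rw [h1] at *
  push_cast at *
  linarith [h1, h2', h3]
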